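/- The size of the renamed clause set is at most four times the size of the original clause set: for any finite set DL of clauses and any set S of predicate symbols, size(R_S(DL)) ≤ 4 · size(DL), where the size of a clause is the number of atom occurrences in it and the size of a clause set is the sum of the sizes of its clauses. -/

import Mathlib

/-- A clause `H ← B`: head and body are finite sets of atoms. -/
structure Clause (α : Type) where
  head : Finset α
  body : Finset α
deriving DecidableEq

variable {V : Type} [DecidableEq V]

/-- Size of a clause: the number of atom occurrences in it. -/
def sizeC {α : Type} (C : Clause α) : ℕ := C.head.card + C.body.card

/-- Size of a (finite) clause set: the sum of the sizes of its clauses. -/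
def sizeSet {α : Type} [DecidableEq α] (N : Finset (Clause α)) : ℕ :=
  ∑ C ∈ N, sizeC C

def embedClause (C : Clause V) : Clause (V ⊕ V) :=
  ⟨C.head.image Sum.inl, C.body.image Sum.inl⟩

/-- The renamed clause `((H \ S) ∪ Neg(B ∩ S)) ← ((B \ S) ∪ Neg(H ∩ S))`. -/
def renameClause (S : Finset V) (C : Clause V) : Clause (V ⊕ V) :=
  ⟨((C.head \ S).image Sum.inl) ∪ ((C.body ∩ S).image Sum.inr),
   ((C.body \ S).image Sum.inl) ∪ ((C.head ∩ S).image Sum.inr)⟩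

/-- The exclusion clause `⊥ ← p ∧ Neg(p)` (size 2). -/
def exclClause (p : V) : Clause (V ⊕ V) :=
  ⟨∅, {Sum.inl p, Sum.inr p}⟩

/-- `R_S(C)`: the clause itself, its renamed version, and one exclusion clause
for each distinct symbol of `S` occurring in `C`. -/
def renameOne (S : Finset V) (C : Clause V) : Finset (Clause (V ⊕ V)) :=
  {embedClause C, renameClause S C} ∪ ((S ∩ (C.head ∪ C.body)).image exclClause)

/-- `R_S(DL)` for a finite clause set `DL`. -/
def renameSet (S : Finset V) (DL : Finset (Clause V)) : Finset (Clause (V ⊕ V)) :=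
  DL.biUnion (renameOne S)

lemma sizeSet_union_le {α : Type} [DecidableEq α] (A B : Finset (Clause α)) :
    sizeSet (A ∪ B) ≤ sizeSet A + sizeSet B := by
  unfold sizeSet
  rw [← Finset.sum_union_inter]
  exact Nat.le_add_right _ _

lemma sizeSet_biUnion_le {β : Type} [DecidableEq β] (s : Finset β)
    (t : β → Finset (Clause (V ⊕ V))) :
    sizeSet (s.biUnion t) ≤ ∑ i ∈ s, sizeSet (t i) := by
  induction s using Finset.induction with
  | empty => simp [sizeSet]
  | insert _ _ h ih =>
    rw [Finset.biUnion_insert, Finset.sum_insert h]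
    exact (sizeSet_union_le _ _).trans (Nat.add_le_add_left ih _)

lemma sizeC_embed (C : Clause V) : sizeC (embedClause C) = sizeC C := by
  simp [sizeC, embedClause, Finset.card_image_of_injective _ Sum.inl_injective]

lemma sizeC_rename (S : Finset V) (C : Clause V) :
    sizeC (renameClause S C) ≤ sizeC C := by
  unfold sizeC renameClause
  dsimp only
  calc _ ≤ ((C.head \ S).image Sum.inl).card + ((C.body ∩ S).image Sum.inr).card
        + (((C.body \ S).image Sum.inl).card + ((C.head ∩ S).image Sum.inr).card) :=
        Nat.add_le_add (Finset.card_union_le _ _) (Finset.card_union_le _ _)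
    _ = ((C.head \ S).card + (C.head ∩ S).card) + ((C.body \ S).card + (C.body ∩ S).card) := by
        rw [Finset.card_image_of_injective _ Sum.inl_injective,
          Finset.card_image_of_injective _ Sum.inr_injective,
          Finset.card_image_of_injective _ Sum.inl_injective,
          Finset.card_image_of_injective _ Sum.inr_injective]
        ring
    _ = C.head.card + C.body.card := by
        rw [Finset.card_sdiff_add_card_inter, Finset.card_sdiff_add_card_inter]

lemma sizeSet_renameOne_le (S : Finset V) (C : Clause V) :
    sizeSet (renameOne S C) ≤ 4 * sizeC C := by
  unfold renameOne
  refine (sizeSet_union_le _ _).trans ?_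
  have h1 : sizeSet ({embedClause C, renameClause S C} : Finset (Clause (V ⊕ V)))
      ≤ 2 * sizeC C := by
    refine (sizeSet_union_le {embedClause C} {renameClause S C}).trans ?_
    have := sizeC_rename S C
    simp only [sizeSet, Finset.sum_singleton, sizeC_embed]
    omega
  have h2 : sizeSet ((S ∩ (C.head ∪ C.body)).image exclClause) ≤ 2 * sizeC C := by
    have hb : ∀ x ∈ (S ∩ (C.head ∪ C.body)).image exclClause, sizeC x ≤ 2 := by
      intro x hx
      obtain ⟨p, -, rfl⟩ := Finset.mem_image.mp hx
      simp only [sizeC, exclClause, Finset.card_empty, Nat.zero_add]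
      exact (Finset.card_insert_le _ _).trans (by simp)
    calc sizeSet ((S ∩ (C.head ∪ C.body)).image exclClause)
        ≤ ((S ∩ (C.head ∪ C.body)).image exclClause).card • 2 :=
          Finset.sum_le_card_nsmul _ _ 2 hb
      _ ≤ (S ∩ (C.head ∪ C.body)).card * 2 := by
          rw [smul_eq_mul]
          exact Nat.mul_le_mul_right 2 (Finset.card_image_le)
      _ ≤ 2 * sizeC C := by
          have : (S ∩ (C.head ∪ C.body)).card ≤ sizeC C :=
            (Finset.card_le_card Finset.inter_subset_right).trans
              (Finset.card_union_le _ _)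
          omega
  omega

/-- `size(R_S(DL)) ≤ 4 · size(DL)`. -/
theorem sizeSet_renameSet_le (DL : Finset (Clause V)) (S : Finset V) :
    sizeSet (renameSet S DL) ≤ 4 * sizeSet DL := by
  refine (sizeSet_biUnion_le DL (renameOne S)).trans ?_
  rw [sizeSet, Finset.mul_sum]
  exact Finset.sum_le_sum fun C _ => sizeSet_renameOne_le S C
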